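/- Let 1 ≤ p ≤ n be integers and let M = (t_{ij}) be a random complex p×n matrix whose entries are independent random variables with E(t_{ij}) = 0 and E(|t_{ij}|²) = 1. Let J ⊆ {1,…,n} be a set of cardinality k ≤ p and σ a permutation of J. If σ is not the identity of J, then E(ξ*_σ) = 0; if σ is the identity of J, then E(ξ*_σ) = p!/(p-k)!. -/

import Mathlib

open MeasureTheory ProbabilityTheory Matrix
open scoped ENNReal

/-- `ξ*_σ = Σ_τ Π_{j∈J} conj(t_{τ(j),j}) t_{τ(j),σ(j)}`, the sum being over all
injective maps `τ : J → {1,…,p}`. -/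
noncomputable def xiStar {p n : ℕ} (M : Matrix (Fin p) (Fin n) ℂ) (J : Finset (Fin n))
    (σ : Equiv.Perm (Fin n)) : ℂ :=
  ∑ τ : { x // x ∈ J } ↪ Fin p, ∏ j : { x // x ∈ J },
    (starRingEnd ℂ) (M (τ j) j) * M (τ j) (σ j)

/-- The Bochner integral of a product of two independent complex random variables is the
product of the integrals, with no integrability assumptions needed. -/
lemma indepFun_integral_mul_complex {Ω : Type*} {mΩ : MeasurableSpace Ω} {μ : Measure Ω}
    [IsProbabilityMeasure μ] {X Y : Ω → ℂ} (h : IndepFun X Y μ)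
    (hX : Measurable X) (hY : Measurable Y) :
    ∫ ω, X ω * Y ω ∂μ = (∫ ω, X ω ∂μ) * ∫ ω, Y ω ∂μ := by
  have hmap := (indepFun_iff_map_prod_eq_prod_map_map hX.aemeasurable hY.aemeasurable).1 h
  have h1 : ∫ ω, X ω * Y ω ∂μ = ∫ z : ℂ × ℂ, z.1 * z.2 ∂(μ.map fun ω => (X ω, Y ω)) := by
    rw [integral_map (hX.aemeasurable.prodMk hY.aemeasurable)]
    exact (measurable_fst.mul measurable_snd).aestronglyMeasurable
  have h2 : ∫ x : ℂ, x ∂(μ.map X) = ∫ ω, X ω ∂μ :=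
    integral_map hX.aemeasurable aestronglyMeasurable_id
  have h3 : ∫ y : ℂ, y ∂(μ.map Y) = ∫ ω, Y ω ∂μ :=
    integral_map hY.aemeasurable aestronglyMeasurable_id
  rw [h1, hmap, integral_prod_mul (fun x : ℂ => x) (fun y : ℂ => y), h2, h3]

/-- Let `1 ≤ p ≤ n` and let `M` be a random complex `p×n` matrix whose entries
are independent with mean `0` and `E(|t_{ij}|²) = 1`.  Let `J ⊆ {1,…,n}` with
`|J| = k ≤ p` and let `σ` be a permutation of `J` (encoded as a permutation of
`{1,…,n}` fixing the complement of `J`).  If `σ ≠ id_J` then `E(ξ*_σ) = 0`, and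
if `σ = id_J` then `E(ξ*_σ) = p!/(p-k)!`. -/
theorem expectation_xiStar (p n : ℕ) (hp : 1 ≤ p) (hpn : p ≤ n)
    (Ω : Type) (_ : MeasureSpace Ω) (_ : IsProbabilityMeasure (volume : Measure Ω))
    (M : Ω → Matrix (Fin p) (Fin n) ℂ)
    (hmeas : ∀ i j, Measurable fun ω => M ω i j)
    (hindep : iIndepFun
      (fun (ij : Fin p × Fin n) ω => M ω ij.1 ij.2) (volume : Measure Ω))
    (hmean : ∀ i j, (∫ ω, M ω i j) = 0)
    (hvar : ∀ i j, (∫ ω, (‖M ω i j‖ : ℝ) ^ 2) = 1)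
    (J : Finset (Fin n)) (hJ : J.card ≤ p)
    (σ : Equiv.Perm (Fin n)) (hσ : ∀ j ∉ J, σ j = j) :
    (σ ≠ 1 → (∫ ω, xiStar (M ω) J σ) = 0) ∧
      (σ = 1 → (∫ ω, xiStar (M ω) J σ) =
        ((p.factorial / (p - J.card).factorial : ℕ) : ℂ)) := by
  classical
  -- the entries are square integrable, hence integrable
  have hIntSq : ∀ i j, Integrable (fun ω => (‖M ω i j‖ : ℝ) ^ 2) := by
    intro i j
    by_contra hc
    have hv := hvar i j
    rw [integral_undef hc] at hv
    exact one_ne_zero hv.symm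
  have hL2 : ∀ i j, MemLp (fun ω => M ω i j) 2 (volume : Measure Ω) := by
    intro i j
    refine (memLp_two_iff_integrable_sq_norm (hmeas i j).aestronglyMeasurable).2 ?_
    simpa using hIntSq i j
  have hInt : ∀ i j, Integrable (fun ω => M ω i j) :=
    fun i j => (hL2 i j).integrable (by norm_num)
  have hstar : Measurable (star : ℂ → ℂ) := continuous_star.measurable
  -- the factors of the products
  set g : ({ x // x ∈ J } ↪ Fin p) → { x // x ∈ J } → Ω → ℂ :=
    fun τ j ω => (starRingEnd ℂ) (M ω (τ j) j) * M ω (τ j) (σ j) with hg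
  have hgmeas : ∀ τ j, Measurable (g τ j) := fun τ j =>
    (hstar.comp (hmeas (τ j) j)).mul (hmeas (τ j) (σ j))
  have hgsq : ∀ τ (j : { x // x ∈ J }), σ (j : Fin n) = (j : Fin n) →
      g τ j = fun ω => ((‖M ω (τ j) j‖ ^ 2 : ℝ) : ℂ) := by
    intro τ j hj
    funext ω
    show (starRingEnd ℂ) (M ω (τ j) j) * M ω (τ j) (σ j) = _
    rw [hj, ← Complex.normSq_eq_norm_sq]
    exact Complex.normSq_eq_conj_mul_self.symm
  -- integrability of each factor
  have hgint : ∀ τ j, Integrable (g τ j) := by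
    intro τ j
    by_cases hj : σ (j : Fin n) = (j : Fin n)
    · rw [hgsq τ j hj]
      exact (hIntSq (τ j) j).ofReal
    · have hne : ((τ j, (j : Fin n)) : Fin p × Fin n) ≠ (τ j, σ (j : Fin n)) := by
        simp only [Ne, Prod.mk.injEq, not_and]
        exact fun _ h => hj h.symm
      have hind : IndepFun (fun ω => M ω (τ j) j) (fun ω => M ω (τ j) (σ j)) :=
        hindep.indepFun hne
      have hind' : IndepFun (fun ω => (starRingEnd ℂ) (M ω (τ j) j))
          (fun ω => M ω (τ j) (σ j)) :=
        hind.comp hstar measurable_id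
      have hIntConj : Integrable (fun ω => (starRingEnd ℂ) (M ω (τ j) j)) := by
        refine ⟨(hstar.comp (hmeas (τ j) j)).aestronglyMeasurable, ?_⟩
        have : (fun ω => (starRingEnd ℂ) (M ω (τ j) j)) = fun ω => star (M ω (τ j) j) := rfl
        rw [this]
        simpa [HasFiniteIntegral] using (hInt (τ j) j).2
      exact hind'.integrable_mul hIntConj (hInt (τ j) (σ j))
  -- value of each factor's integral
  have hgone : ∀ τ (j : { x // x ∈ J }), σ (j : Fin n) = (j : Fin n) →
      (∫ ω, g τ j ω) = 1 := by
    intro τ j hj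
    simp only [hgsq τ j hj]
    rw [show (∫ ω, ((‖M ω (τ j) j‖ ^ 2 : ℝ) : ℂ)) =
        ((∫ ω, (‖M ω (τ j) j‖ ^ 2 : ℝ) : ℝ) : ℂ) from integral_ofReal,
      hvar (τ j) j]
    norm_num
  have hgzero : ∀ τ (j : { x // x ∈ J }), σ (j : Fin n) ≠ (j : Fin n) →
      (∫ ω, g τ j ω) = 0 := by
    intro τ j hj
    have hne : ((τ j, (j : Fin n)) : Fin p × Fin n) ≠ (τ j, σ (j : Fin n)) := by
      simp only [Ne, Prod.mk.injEq, not_and]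
      exact fun _ h => hj h.symm
    have hind : IndepFun (fun ω => M ω (τ j) j) (fun ω => M ω (τ j) (σ j)) :=
      hindep.indepFun hne
    have hind' : IndepFun (fun ω => (starRingEnd ℂ) (M ω (τ j) j))
        (fun ω => M ω (τ j) (σ j)) :=
      hind.comp hstar measurable_id
    have h0 : (∫ ω, g τ j ω) =
        (∫ ω, (starRingEnd ℂ) (M ω (τ j) j)) * ∫ ω, M ω (τ j) (σ j) :=
      indepFun_integral_mul_complex hind' (hstar.comp (hmeas (τ j) j)) (hmeas (τ j) (σ j))
    rw [h0, hmean (τ j) (σ j), mul_zero]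
  -- each factor is independent of a product of other factors
  have hblock : ∀ (τ : { x // x ∈ J } ↪ Fin p) (s : Finset { x // x ∈ J })
      (j : { x // x ∈ J }), j ∉ s →
      IndepFun (g τ j) (fun ω => ∏ j' ∈ s, g τ j' ω) := by
    intro τ s j hjs
    set S : Finset (Fin p × Fin n) := {(τ j, (j : Fin n)), (τ j, σ (j : Fin n))} with hS
    set T : Finset (Fin p × Fin n) :=
      s.biUnion (fun j' => {(τ j', (j' : Fin n)), (τ j', σ (j' : Fin n))}) with hT
    have hST : Disjoint S T := by
      rw [Finset.disjoint_left]
      intro a haS haT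
      have ha1 : a.1 = τ j := by
        rw [hS] at haS
        simp only [Finset.mem_insert, Finset.mem_singleton] at haS
        rcases haS with h | h <;> rw [h]
      rw [hT] at haT
      simp only [Finset.mem_biUnion, Finset.mem_insert, Finset.mem_singleton] at haT
      obtain ⟨j', hj's, hj'⟩ := haT
      have ha1' : a.1 = τ j' := by rcases hj' with h | h <;> rw [h]
      have hjj' : j = j' := τ.injective (ha1.symm.trans ha1')
      exact hjs (hjj' ▸ hj's)
    have hmem1 : ((τ j, (j : Fin n)) : Fin p × Fin n) ∈ S := by
      rw [hS]; exact Finset.mem_insert_self _ _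
    have hmem2 : ((τ j, σ (j : Fin n)) : Fin p × Fin n) ∈ S := by
      rw [hS]; exact Finset.mem_insert_of_mem (Finset.mem_singleton_self _)
    have hmemT1 : ∀ j' ∈ s, ((τ j', (j' : Fin n)) : Fin p × Fin n) ∈ T := by
      intro j' hj'
      rw [hT]
      exact Finset.mem_biUnion.2 ⟨j', hj', Finset.mem_insert_self _ _⟩
    have hmemT2 : ∀ j' ∈ s, ((τ j', σ (j' : Fin n)) : Fin p × Fin n) ∈ T := by
      intro j' hj'
      rw [hT]
      exact Finset.mem_biUnion.2
        ⟨j', hj', Finset.mem_insert_of_mem (Finset.mem_singleton_self _)⟩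
    have base := hindep.indepFun_finset S T hST (fun ij => hmeas ij.1 ij.2)
    have hφ : Measurable (fun v : { x // x ∈ S } → ℂ =>
        (starRingEnd ℂ) (v ⟨(τ j, (j : Fin n)), hmem1⟩) *
          v ⟨(τ j, σ (j : Fin n)), hmem2⟩) :=
      (hstar.comp (measurable_pi_apply _)).mul (measurable_pi_apply _)
    have hψ : Measurable (fun v : { x // x ∈ T } → ℂ =>
        ∏ j' ∈ s.attach,
          (starRingEnd ℂ) (v ⟨(τ j', ((j' : { x // x ∈ J }) : Fin n)), hmemT1 j' j'.2⟩) *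
            v ⟨(τ j', σ ((j' : { x // x ∈ J }) : Fin n)), hmemT2 j' j'.2⟩) :=
      Finset.measurable_prod _ (fun j' _ =>
        (hstar.comp (measurable_pi_apply _)).mul (measurable_pi_apply _))
    have hcomp := base.comp hφ hψ
    have heq2 : (fun ω => ∏ j' ∈ s, g τ j' ω) =
        ((fun v : { x // x ∈ T } → ℂ =>
          ∏ j' ∈ s.attach,
            (starRingEnd ℂ) (v ⟨(τ j', ((j' : { x // x ∈ J }) : Fin n)), hmemT1 j' j'.2⟩) *
              v ⟨(τ j', σ ((j' : { x // x ∈ J }) : Fin n)), hmemT2 j' j'.2⟩) ∘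
          (fun a (i : { x // x ∈ T }) =>
            M a (i : Fin p × Fin n).1 (i : Fin p × Fin n).2)) := by
      funext ω
      exact (Finset.prod_attach s fun j' => g τ j' ω).symm
    rw [heq2]
    exact hcomp
  -- the expectation of each product factorizes
  have key : ∀ (τ : { x // x ∈ J } ↪ Fin p) (s : Finset { x // x ∈ J }),
      Integrable (fun ω => ∏ j ∈ s, g τ j ω) ∧
        (∫ ω, ∏ j ∈ s, g τ j ω) = ∏ j ∈ s, ∫ ω, g τ j ω := by
    intro τ s
    induction s using Finset.induction_on with
    | empty => simp
    | @insert j s hjs ih =>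
      have hprod_meas : Measurable (fun ω => ∏ j' ∈ s, g τ j' ω) :=
        Finset.measurable_prod _ (fun j' _ => hgmeas τ j')
      have hindJ := hblock τ s j hjs
      have heq : (fun ω => ∏ j' ∈ insert j s, g τ j' ω) =
          fun ω => g τ j ω * ∏ j' ∈ s, g τ j' ω := by
        funext ω; exact Finset.prod_insert hjs
      constructor
      · rw [heq]
        exact hindJ.integrable_mul (hgint τ j) ih.1
      · have h0 : (∫ ω, g τ j ω * ∏ j' ∈ s, g τ j' ω) =
            (∫ ω, g τ j ω) * ∫ ω, ∏ j' ∈ s, g τ j' ω :=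
          indepFun_integral_mul_complex hindJ (hgmeas τ j) hprod_meas
        rw [heq, h0, ih.2, Finset.prod_insert hjs]
  -- the expectation of `ξ*`
  have hxi : (∫ ω, xiStar (M ω) J σ) =
      ∑ τ : { x // x ∈ J } ↪ Fin p, ∏ j : { x // x ∈ J }, ∫ ω, g τ j ω := by
    have h1 : (fun ω => xiStar (M ω) J σ) =
        fun ω => ∑ τ : { x // x ∈ J } ↪ Fin p, ∏ j : { x // x ∈ J }, g τ j ω := rfl
    rw [h1, integral_finset_sum _ (fun τ _ => (key τ Finset.univ).1)]
    exact Finset.sum_congr rfl fun τ _ => (key τ Finset.univ).2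
  constructor
  · intro hσne
    obtain ⟨x, hx⟩ : ∃ x, σ x ≠ x := by
      by_contra hc
      push_neg at hc
      exact hσne (Equiv.ext hc)
    have hxJ : x ∈ J := by
      by_contra h
      exact hx (hσ x h)
    rw [hxi]
    refine Finset.sum_eq_zero fun τ _ => ?_
    exact Finset.prod_eq_zero (Finset.mem_univ (⟨x, hxJ⟩ : { x // x ∈ J }))
      (hgzero τ ⟨x, hxJ⟩ hx)
  · intro hσ1
    rw [hxi]
    have hone : ∀ τ : { x // x ∈ J } ↪ Fin p,
        ∏ j : { x // x ∈ J }, (∫ ω, g τ j ω) = 1 := by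
      intro τ
      refine Finset.prod_eq_one fun j _ => hgone τ j ?_
      rw [hσ1]; rfl
    rw [Finset.sum_congr rfl fun τ _ => hone τ, Finset.sum_const, Finset.card_univ,
      Fintype.card_embedding_eq, Fintype.card_coe, Fintype.card_fin,
      Nat.descFactorial_eq_div hJ]
    simp
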